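/- Suppose the normalized Laplacian 𝓛 admits an orthogonal eigendecomposition 𝓛 = U Λ Uᵀ with U an orthogonal n×n real matrix and Λ diagonal. Then for every natural number k and every vector x in ℝ^n, the k-times iterated bilateral filter output x_out = (D⁻¹ W)^k x satisfies D^{1/2} x_out = U (I − Λ)^k Uᵀ D^{1/2} x; i.e. the k-times iterated bilateral filter is a graph spectral filter with spectral response h(λ) = (1 − λ)^k. -/

import Mathlib

open Matrix

/-- The k-times iterated bilateral filter is a graph spectral filter with spectral
response `h(λ) = (1 − λ)^k`:  `D^{1/2} x_out = U (I − Λ)^k Uᵀ D^{1/2} x`. -/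
theorem iterated_bilateral_filter_spectral_response (n : ℕ) (hn : 0 < n)
    (W : Matrix (Fin n) (Fin n) ℝ) (hWsymm : W.IsSymm)
    (hWnn : ∀ i j, 0 ≤ W i j)
    (d : Fin n → ℝ) (hd : ∀ j, d j = ∑ i, W i j) (hdpos : ∀ j, 0 < d j)
    (D Dhalf Dinvhalf L : Matrix (Fin n) (Fin n) ℝ)
    (hD : D = Matrix.diagonal d)
    (hDhalf : Dhalf = Matrix.diagonal fun j => Real.sqrt (d j))
    (hDinvhalf : Dinvhalf = Matrix.diagonal fun j => (Real.sqrt (d j))⁻¹)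
    (hL : L = Dinvhalf * (D - W) * Dinvhalf)
    (U Λ : Matrix (Fin n) (Fin n) ℝ)
    (hUorth : U * Uᵀ = 1) (hUorth' : Uᵀ * U = 1)
    (hΛ : Λ.IsDiag) (hdec : L = U * Λ * Uᵀ)
    (k : ℕ) (x xout : Fin n → ℝ)
    (hxout : xout = ((D⁻¹ * W) ^ k) *ᵥ x) :
    Dhalf *ᵥ xout = (U * (1 - Λ) ^ k * Uᵀ) *ᵥ (Dhalf *ᵥ x) := by
  have hdne : ∀ j, d j ≠ 0 := fun j => (hdpos j).ne'
  have hs : ∀ j, Real.sqrt (d j) ≠ 0 :=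
    fun j => (Real.sqrt_pos.mpr (hdpos j)).ne'
  have hDinv : D⁻¹ = Matrix.diagonal fun j => (d j)⁻¹ := by
    apply Matrix.inv_eq_right_inv
    rw [hD, Matrix.diagonal_mul_diagonal]
    have : (fun j => d j * (d j)⁻¹) = fun _ => (1 : ℝ) := by
      funext j; exact mul_inv_cancel₀ (hdne j)
    rw [this, Matrix.diagonal_one]
  have hID : Dinvhalf * Dhalf = 1 := by
    rw [hDinvhalf, hDhalf, Matrix.diagonal_mul_diagonal]
    have : (fun j => (Real.sqrt (d j))⁻¹ * Real.sqrt (d j)) = fun _ => (1 : ℝ) := by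
      funext j; exact inv_mul_cancel₀ (hs j)
    rw [this, Matrix.diagonal_one]
  have hDiD : Dinvhalf * D = Dhalf := by
    rw [hDinvhalf, hD, hDhalf, Matrix.diagonal_mul_diagonal]
    have : (fun j => (Real.sqrt (d j))⁻¹ * d j) = fun j => Real.sqrt (d j) := by
      funext j; field_simp
      rw [div_eq_iff (hs j), Real.mul_self_sqrt (hdpos j).le]
    rw [this]
  have hDhDinv : Dhalf * D⁻¹ = Dinvhalf := by
    rw [hDinv, hDhalf, hDinvhalf, Matrix.diagonal_mul_diagonal]
    have : (fun j => Real.sqrt (d j) * (d j)⁻¹) = fun j => (Real.sqrt (d j))⁻¹ := by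
      funext j; field_simp
      rw [div_eq_div_iff (hdne j) (hs j), one_mul,
        Real.mul_self_sqrt (hdpos j).le]
    rw [this]
  -- 1 - L = Dinvhalf * W * Dinvhalf
  have honeL : (1 : Matrix (Fin n) (Fin n) ℝ) - L = Dinvhalf * W * Dinvhalf := by
    rw [hL, Matrix.mul_sub, Matrix.sub_mul, hDiD]
    rw [show Dhalf * Dinvhalf = 1 by
      rw [hDhalf, hDinvhalf, Matrix.diagonal_mul_diagonal]
      have : (fun j => Real.sqrt (d j) * (Real.sqrt (d j))⁻¹) = fun _ => (1 : ℝ) := by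
        funext j; exact mul_inv_cancel₀ (hs j)
      rw [this, Matrix.diagonal_one]]
    abel
  -- commuting relation
  have hcomm : Dhalf * (D⁻¹ * W) = (1 - L) * Dhalf := by
    rw [honeL, ← Matrix.mul_assoc, hDhDinv, Matrix.mul_assoc, Matrix.mul_assoc, hID,
      Matrix.mul_one]
  have hpow : ∀ m : ℕ, Dhalf * (D⁻¹ * W) ^ m = (1 - L) ^ m * Dhalf := by
    intro m
    induction m with
    | zero => simp
    | succ m ih =>
        rw [pow_succ', pow_succ', ← Matrix.mul_assoc, hcomm, Matrix.mul_assoc, ih,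
          ← Matrix.mul_assoc]
  have h1L : (1 : Matrix (Fin n) (Fin n) ℝ) - L = U * (1 - Λ) * Uᵀ := by
    rw [Matrix.mul_sub, Matrix.sub_mul, Matrix.mul_one, hUorth, hdec]
  have hspec : ∀ m : ℕ, ((1 : Matrix (Fin n) (Fin n) ℝ) - L) ^ m = U * (1 - Λ) ^ m * Uᵀ := by
    intro m
    induction m with
    | zero => simp [hUorth]
    | succ m ih =>
        rw [pow_succ, pow_succ, ih, h1L]
        simp only [Matrix.mul_assoc]
        rw [← Matrix.mul_assoc Uᵀ U, hUorth', Matrix.one_mul]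
  rw [hxout, Matrix.mulVec_mulVec, hpow k, hspec k, Matrix.mulVec_mulVec,
    ← Matrix.mulVec_mulVec]
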